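/- Strict safety margin of the model-based gradient flow: Fix k > 0 and μ > 0. Let m := min{‖∇h(θ)‖ : θ ∈ ∂S}, let c₀ > 0 be such that ‖∇h(θ)‖ ≥ m/2 for all θ in the closure of S with h(θ) ≤ c₀, let M_h := max{‖∇h(θ)‖ : θ ∈ cl(S), h(θ) ≤ c₀} and M_J := max{‖H(θ − θ*)‖ : θ ∈ cl(S), h(θ) ≤ c₀} (assumed positive), and set c₁ := min(c₀, μ·m²/(8·M_J·M_h)). Then every differentiable curve ϑ : [t₀, T') → S satisfying ϑ'(t) = −k·∇Ĵ_μ(ϑ(t)) for all t and h(ϑ(t₀)) ≥ c₁ satisfies h(ϑ(t)) ≥ c₁ for all t ∈ [t₀, T'). -/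

import Mathlib

open Real Set
open scoped RealInnerProductSpace

theorem strict_safety_margin_of_model_based_flow
    {n : ℕ} (hn : 1 ≤ n)
    (Jstar : ℝ) (θs : EuclideanSpace ℝ (Fin n))
    (H : EuclideanSpace ℝ (Fin n) →L[ℝ] EuclideanSpace ℝ (Fin n))
    (Hsymm : ∀ x y : EuclideanSpace ℝ (Fin n), ⟪H x, y⟫ = ⟪x, H y⟫)
    (Hpos : ∀ x : EuclideanSpace ℝ (Fin n), x ≠ 0 → 0 < ⟪x, H x⟫)
    (J : EuclideanSpace ℝ (Fin n) → ℝ)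
    (hJdef : ∀ θ, J θ = Jstar + (1 / 2) * ⟪θ - θs, H (θ - θs)⟫)
    (h : EuclideanSpace ℝ (Fin n) → ℝ) (hh : ContDiff ℝ 2 h)
    (S : Set (EuclideanSpace ℝ (Fin n))) (hSdef : S = {θ | 0 < h θ})
    (hSne : S.Nonempty)
    (hbdry : IsCompact (frontier S))
    (hgradne : ∀ θ ∈ frontier S, gradient h θ ≠ 0)
    (hsub : ∀ c : ℝ, IsCompact {θ | h θ ≤ c})
    (Jhat : ℝ → EuclideanSpace ℝ (Fin n) → ℝ)
    (hJhatdef : ∀ μ θ, Jhat μ θ = J θ - μ * Real.log (h θ))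
    (k μ : ℝ) (hk : 0 < k) (hμ : 0 < μ)
    (m : ℝ) (hm : IsLeast ((fun θ => ‖gradient h θ‖) '' frontier S) m)
    (c₀ : ℝ) (hc₀ : 0 < c₀)
    (hc₀m : ∀ θ ∈ closure S, h θ ≤ c₀ → m / 2 ≤ ‖gradient h θ‖)
    (Mh MJ : ℝ)
    (hMh : IsGreatest ((fun θ => ‖gradient h θ‖) '' {θ ∈ closure S | h θ ≤ c₀}) Mh)
    (hMJ : IsGreatest ((fun θ => ‖H (θ - θs)‖) '' {θ ∈ closure S | h θ ≤ c₀}) MJ)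
    (hMh0 : 0 < Mh) (hMJ0 : 0 < MJ)
    (c₁ : ℝ) (hc₁ : c₁ = min c₀ (μ * m ^ 2 / (8 * MJ * Mh)))
    (t₀ T' : ℝ) (ϑ : ℝ → EuclideanSpace ℝ (Fin n))
    (hmem : ∀ t ∈ Set.Ico t₀ T', ϑ t ∈ S)
    (hode : ∀ t ∈ Set.Ico t₀ T', HasDerivAt ϑ
        (-k • (H (ϑ t - θs) - (μ / h (ϑ t)) • gradient h (ϑ t))) t)
    (hinit : c₁ ≤ h (ϑ t₀)) :
    ∀ t ∈ Set.Ico t₀ T', c₁ ≤ h (ϑ t) := by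
  intro t ht
  by_contra hcon
  push_neg at hcon
  obtain ⟨θb, hθbmem, hθbeq⟩ := hm.1
  have hm0 : 0 < m := by
    rw [← hθbeq]
    exact norm_pos_iff.mpr (hgradne θb hθbmem)
  have hden0 : (0:ℝ) < 8 * MJ * Mh := by
    have := mul_pos hMJ0 hMh0; nlinarith
  have hX0 : 0 < μ * m ^ 2 / (8 * MJ * Mh) :=
    div_pos (mul_pos hμ (pow_pos hm0 2)) hden0
  have hc₁0 : 0 < c₁ := by rw [hc₁]; exact lt_min hc₀ hX0
  have hdiff : Differentiable ℝ h := hh.differentiable (by norm_num)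
  set g : ℝ → ℝ := fun u => h (ϑ u) with hgdef
  set d : ℝ → ℝ := fun u =>
    k * ((μ / h (ϑ u)) * ‖gradient h (ϑ u)‖ ^ 2 - ⟪gradient h (ϑ u), H (ϑ u - θs)⟫) with hddef
  have hgd : ∀ u ∈ Set.Ico t₀ T', HasDerivAt g (d u) u := by
    intro u hu
    have h1 : HasGradientAt h (gradient h (ϑ u)) (ϑ u) := (hdiff (ϑ u)).hasGradientAt
    have h2 := h1.hasFDerivAt.comp_hasDerivAt u (hode u hu)
    refine h2.congr_deriv ?_
    simp only [hddef, ContinuousLinearMap.coe_comp', Function.comp_apply,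
      InnerProductSpace.toDual_apply_apply, inner_smul_right, inner_sub_right,
      real_inner_smul_right, real_inner_self_eq_norm_sq]
    ring
  have hdpos : ∀ u ∈ Set.Ico t₀ T', g u ≤ c₁ → 0 < d u := by
    intro u hu hle
    have hθS : ϑ u ∈ S := hmem u hu
    have hθpos : 0 < h (ϑ u) := by rw [hSdef] at hθS; exact hθS
    have hθcl : ϑ u ∈ closure S := subset_closure hθS
    have hc₀le : h (ϑ u) ≤ c₀ := le_trans hle (hc₁ ▸ min_le_left _ _)
    have hgl : m / 2 ≤ ‖gradient h (ϑ u)‖ := hc₀m _ hθcl hc₀le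
    have hgu : ‖gradient h (ϑ u)‖ ≤ Mh := hMh.2 ⟨_, ⟨hθcl, hc₀le⟩, rfl⟩
    have hHu : ‖H (ϑ u - θs)‖ ≤ MJ := hMJ.2 ⟨_, ⟨hθcl, hc₀le⟩, rfl⟩
    have hinner : ⟪gradient h (ϑ u), H (ϑ u - θs)⟫ ≤ Mh * MJ :=
      le_trans (real_inner_le_norm _ _)
        (mul_le_mul hgu hHu (norm_nonneg _) hMh0.le)
    have hXle : h (ϑ u) ≤ μ * m ^ 2 / (8 * MJ * Mh) :=
      le_trans hle (hc₁ ▸ min_le_right _ _)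
    have hsq : (m / 2) ^ 2 ≤ ‖gradient h (ϑ u)‖ ^ 2 := by
      have hm2 : (0:ℝ) ≤ m / 2 := by linarith
      exact pow_le_pow_left₀ hm2 hgl 2
    have key : 2 * (MJ * Mh) ≤ (μ / h (ϑ u)) * ‖gradient h (ϑ u)‖ ^ 2 := by
      have h1 : 2 * (MJ * Mh) ≤ (μ / h (ϑ u)) * ((m / 2) ^ 2) := by
        rw [div_mul_eq_mul_div, le_div_iff₀ hθpos]
        calc 2 * (MJ * Mh) * h (ϑ u)
            ≤ 2 * (MJ * Mh) * (μ * m ^ 2 / (8 * MJ * Mh)) := by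
              refine mul_le_mul_of_nonneg_left hXle ?_
              nlinarith [mul_pos hMJ0 hMh0]
          _ = μ * (m / 2) ^ 2 := by field_simp; ring
      refine le_trans h1 (mul_le_mul_of_nonneg_left hsq ?_)
      exact (div_pos hμ hθpos).le
    have hpos : 0 < (μ / h (ϑ u)) * ‖gradient h (ϑ u)‖ ^ 2
        - ⟪gradient h (ϑ u), H (ϑ u - θs)⟫ := by
      nlinarith [mul_pos hMJ0 hMh0]
    exact mul_pos hk hpos
  have hsub' : Set.Icc t₀ t ⊆ Set.Ico t₀ T' :=
    fun u hu => ⟨hu.1, lt_of_le_of_lt hu.2 ht.2⟩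
  have hgcont : ContinuousOn g (Set.Icc t₀ t) :=
    fun u hu => ((hgd u (hsub' hu)).continuousAt).continuousWithinAt
  set A : Set ℝ := {u ∈ Set.Icc t₀ t | c₁ ≤ g u} with hAdef
  have hAne : A.Nonempty := ⟨t₀, ⟨le_refl _, ht.1⟩, hinit⟩
  have hAbdd : BddAbove A := ⟨t, fun u hu => hu.1.2⟩
  have hAclosed : IsClosed A := by
    have hAeq : A = Set.Icc t₀ t ∩ g ⁻¹' Set.Ici c₁ := rfl
    rw [hAeq]
    exact hgcont.preimage_isClosed_of_isClosed isClosed_Icc isClosed_Ici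
  set s := sSup A with hsdef
  have hsA : s ∈ A := hAclosed.csSup_mem hAne hAbdd
  have hst : s < t := by
    rcases lt_or_eq_of_le hsA.1.2 with heq | heq
    · exact heq
    · exact absurd (heq ▸ hsA.2) (not_le.mpr hcon)
  have hIoc : ∀ u ∈ Set.Ioc s t, g u < c₁ := by
    intro u hu
    by_contra hge
    push_neg at hge
    exact absurd (le_csSup hAbdd ⟨⟨le_trans hsA.1.1 hu.1.le, hu.2⟩, hge⟩)
      (not_le.mpr hu.1)
  have hsIco : s ∈ Set.Ico t₀ T' := hsub' hsA.1
  have hgs_le : g s ≤ c₁ := by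
    have htend : Filter.Tendsto g (nhdsWithin s (Set.Ioi s)) (nhds (g s)) :=
      ((hgd s hsIco).continuousAt).tendsto.mono_left nhdsWithin_le_nhds
    refine le_of_tendsto htend ?_
    filter_upwards [Ioc_mem_nhdsGT hst] with u hu
    exact (hIoc u hu).le
  have hds : 0 < d s := hdpos s hsIco hgs_le
  have hslope : Filter.Tendsto (slope g s) (nhdsWithin s {s}ᶜ) (nhds (d s)) :=
    hasDerivAt_iff_tendsto_slope.mp (hgd s hsIco)
  have h1 : ∀ᶠ u in nhdsWithin s (Set.Ioi s), 0 < slope g s u :=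
    (hslope.eventually (eventually_gt_nhds hds)).filter_mono
      (nhdsWithin_mono s fun u hu => ne_of_gt hu)
  have h2 : ∀ᶠ u in nhdsWithin s (Set.Ioi s), u ∈ Set.Ioc s t :=
    Ioc_mem_nhdsGT hst
  obtain ⟨u, hu1, hu2⟩ := (h1.and h2).exists
  have hgu : g s < g u := by
    rw [slope_def_field] at hu1
    have hb : 0 < u - s := sub_pos.mpr hu2.1
    have hpos : 0 < g u - g s := by
      have hmul := mul_pos hu1 hb
      rwa [div_mul_cancel₀ _ (ne_of_gt hb)] at hmul
    linarith
  exact absurd (hIoc u hu2) (not_lt.mpr (le_trans hsA.2 hgu.le))
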